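/- Coequivariance of the cocomposition of graphs: for every n ≥ 1, all positive integers m_1,…,m_n, all permutations σ ∈ S_n and τ_i ∈ S_{m_i} (i = 1,…,n), and every (m_1+⋯+m_n)-graph Γ, one has Δ_0^{m_{σ⁻¹(1)}…m_{σ⁻¹(n)}}((σ(τ_1,…,τ_n))(Γ)) = σ(Δ_0^{m_1…m_n}(Γ)) as n-graphs, and for every 1 ≤ i ≤ n, Δ_i^{m_{σ⁻¹(1)}…m_{σ⁻¹(n)}}((σ(τ_1,…,τ_n))(Γ)) = τ_{σ⁻¹(i)}(Δ_{σ⁻¹(i)}^{m_1…m_n}(Γ)) as m_{σ⁻¹(i)}-graphs. -/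

import Mathlib

open Equiv

/-- The equivalence between the lexicographically ordered sigma of `Fin (m i)` over `Fin n`
and `Fin (∑ i, m i)`, identifying the `i`-th block with the positions
`m 0 + ⋯ + m (i-1) + 1, …, m 0 + ⋯ + m i`. -/
def sigmaFinSucc {n : ℕ} (β : Fin (n + 1) → Type*) :
    (Σ i : Fin (n + 1), β i) ≃ β 0 ⊕ (Σ i : Fin n, β i.succ) where
  toFun p :=
    Fin.cases (motive := fun i => β i → β 0 ⊕ (Σ i : Fin n, β i.succ))
      Sum.inl (fun i j => Sum.inr ⟨i, j⟩) p.1 p.2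
  invFun x := Sum.elim (fun j => ⟨0, j⟩) (fun p => ⟨p.1.succ, p.2⟩) x
  left_inv := by
    rintro ⟨i, j⟩
    induction i using Fin.cases with
    | zero => simp
    | succ i => simp
  right_inv := by rintro (j | ⟨i, j⟩) <;> simp

def finSigmaEquiv : ∀ (n : ℕ) (m : Fin n → ℕ), (Σ i, Fin (m i)) ≃ Fin (∑ i, m i)
  | 0, m =>
    haveI h1 : IsEmpty (Σ i : Fin 0, Fin (m i)) := ⟨fun p => p.1.elim0⟩
    haveI h2 : IsEmpty (Fin (∑ i, m i)) := by
      rw [show (∑ i, m i) = 0 by simp]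
      infer_instance
    Equiv.equivOfIsEmpty _ _
  | n + 1, m =>
    ((sigmaFinSucc fun i => Fin (m i)).trans <|
      ((Equiv.refl (Fin (m 0))).sumCongr (finSigmaEquiv n fun i => m i.succ)).trans <|
        finSumFinEquiv.trans (finCongr (Fin.sum_univ_succ m).symm))

/-- The operadic composition of permutations `σ(τ_1,…,τ_n) ∈ S_{m_1 + ⋯ + m_n}`:
the element in the `i`-th block at position `j` is sent to position `τ_i(j)` of the
block placed at slot `σ(i)`, the blocks being rearranged according to `σ` (so that the
new `k`-th block has size `m (σ⁻¹ k)`). -/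
def permCompose {n : ℕ} {m : Fin n → ℕ} (σ : Equiv.Perm (Fin n))
    (τ : ∀ i, Equiv.Perm (Fin (m i))) : Equiv.Perm (Fin (∑ i, m i)) :=
  ((finSigmaEquiv n m).symm.trans <|
    (Equiv.sigmaCongr σ fun i =>
      (τ i).trans (finCongr (congrArg m (σ.symm_apply_apply i).symm))).trans <|
    (finSigmaEquiv n fun k => m (σ.symm k)).trans (finCongr (Equiv.sum_comp σ.symm m)))

/-- The `0`-th cocomposition `Δ_0^{m_1…m_n}(Γ)` of an `M`-graph `Γ` (a multiset of
oriented edges on `Fin M`, `M = ∑ m i`): the `n`-graph obtained by collapsing each of the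
blocks of sizes `m_1,…,m_n` to a single vertex, keeping (with multiplicity) the edges
joining two different blocks. -/
def graphDelta0 {n : ℕ} (m : Fin n → ℕ)
    (Γ : Multiset (Fin (∑ i, m i) × Fin (∑ i, m i))) : Multiset (Fin n × Fin n) :=
  Γ.filterMap fun e =>
    if ((finSigmaEquiv n m).symm e.1).1 = ((finSigmaEquiv n m).symm e.2).1 then none
    else some (((finSigmaEquiv n m).symm e.1).1, ((finSigmaEquiv n m).symm e.2).1)

/-- The `i`-th cocomposition `Δ_i^{m_1…m_n}(Γ)` of an `M`-graph `Γ`: the `m_i`-graph of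
edges of `Γ` lying inside the `i`-th block, relabelled by the positions within the
block. -/
def graphDeltaI {n : ℕ} (m : Fin n → ℕ) (i : Fin n)
    (Γ : Multiset (Fin (∑ i, m i) × Fin (∑ i, m i))) : Multiset (Fin (m i) × Fin (m i)) :=
  Γ.filterMap fun e =>
    if h : ((finSigmaEquiv n m).symm e.1).1 = i ∧ ((finSigmaEquiv n m).symm e.2).1 = i then
      some (Fin.cast (congrArg m h.1) ((finSigmaEquiv n m).symm e.1).2,
        Fin.cast (congrArg m h.2) ((finSigmaEquiv n m).symm e.2).2)
    else none

lemma sum_blocks {n : ℕ} (m : Fin n → ℕ) (ℓ : Fin (∑ i, m i) → ℕ) :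
    (∑ j, ℓ j) = ∑ i, ∑ j : Fin (m i), ℓ (finSigmaEquiv n m ⟨i, j⟩) := by
  rw [← Equiv.sum_comp (finSigmaEquiv n m) ℓ, ← Finset.univ_sigma_univ, Finset.sum_sigma]

lemma permCompose_repr {n : ℕ} {m : Fin n → ℕ} (σ : Equiv.Perm (Fin n))
    (τ : ∀ i, Equiv.Perm (Fin (m i))) (x : Fin (∑ i, m i)) :
    (finSigmaEquiv n fun k => m (σ.symm k)).symm
      (Fin.cast (Equiv.sum_comp σ.symm m).symm (permCompose σ τ x)) =
    (Equiv.sigmaCongr σ fun i =>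
      (τ i).trans (finCongr (congrArg m (σ.symm_apply_apply i).symm)))
      ((finSigmaEquiv n m).symm x) := by
  simp [permCompose, Equiv.trans_apply]

def deltaIFun {n : ℕ} (m : Fin n → ℕ) (i : Fin n) (p q : Σ j, Fin (m j)) :
    Option (Fin (m i) × Fin (m i)) :=
  if h : p.1 = i ∧ q.1 = i then
    some (Fin.cast (congrArg m h.1) p.2, Fin.cast (congrArg m h.2) q.2)
  else none

lemma deltaIFun_equivar {n : ℕ} {m : Fin n → ℕ} (σ : Equiv.Perm (Fin n))
    (τ : ∀ i, Equiv.Perm (Fin (m i))) (i : Fin n) (p q : Σ j, Fin (m j)) :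
    deltaIFun (fun k => m (σ.symm k)) i
      ((Equiv.sigmaCongr σ fun j =>
        (τ j).trans (finCongr (congrArg m (σ.symm_apply_apply j).symm))) p)
      ((Equiv.sigmaCongr σ fun j =>
        (τ j).trans (finCongr (congrArg m (σ.symm_apply_apply j).symm))) q) =
    Option.map (fun e => (τ (σ.symm i) e.1, τ (σ.symm i) e.2)) (deltaIFun m (σ.symm i) p q) := by
  rcases p with ⟨i1, j1⟩
  rcases q with ⟨i2, j2⟩
  by_cases h : i1 = σ.symm i ∧ i2 = σ.symm i
  · obtain ⟨rfl, rfl⟩ := h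
    simp [deltaIFun, Equiv.sigmaCongr, Equiv.sigmaCongrLeft, Equiv.sigmaCongrRight, Sigma.map, Equiv.coe_fn_mk, Fin.ext_iff]
    exact ⟨rfl, rfl⟩
  · rw [deltaIFun, dif_neg, deltaIFun, dif_neg h]
    · simp
    · simp only [Equiv.sigmaCongr, Equiv.coe_fn_mk, Sigma.map]
      intro hc
      exact h ⟨by rw [← hc.1]; simp, by rw [← hc.2]; simp⟩

/-- **Coequivariance of the cocomposition of graphs** (Proposition 6.5 of
Bakalov–De Sole–Heluani–Kac): for all permutations `σ ∈ S_n` and `τ_i ∈ S_{m_i}`, and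
every `(m_1 + ⋯ + m_n)`-graph `Γ`, one has
`Δ_0^{m_{σ⁻¹(1)}…m_{σ⁻¹(n)}}((σ(τ_1,…,τ_n))(Γ)) = σ(Δ_0^{m_1…m_n}(Γ))` and, for each
`i`, `Δ_i^{m_{σ⁻¹(1)}…m_{σ⁻¹(n)}}((σ(τ_1,…,τ_n))(Γ)) = τ_{σ⁻¹(i)}(Δ_{σ⁻¹(i)}^{m_1…m_n}(Γ))`,
where a permutation acts on a graph by relabelling the endpoints of all edges, and
`Fin (∑ i, m i)` is identified with `Fin (∑ i, m (σ⁻¹ i))` by the value-preserving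
cast. -/
theorem graph_cocomposition_coequivariance
    (n : ℕ) (hn : 1 ≤ n) (m : Fin n → ℕ) (hm : ∀ i, 1 ≤ m i)
    (σ : Equiv.Perm (Fin n)) (τ : ∀ i, Equiv.Perm (Fin (m i)))
    (Γ : Multiset (Fin (∑ i, m i) × Fin (∑ i, m i)))
    (hΓ : ∀ e ∈ Γ, e.1 ≠ e.2) :
    (graphDelta0 (fun i => m (σ.symm i))
        ((Γ.map fun e => (permCompose σ τ e.1, permCompose σ τ e.2)).map fun e =>
          (Fin.cast (Equiv.sum_comp σ.symm m).symm e.1,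
            Fin.cast (Equiv.sum_comp σ.symm m).symm e.2)) =
      (graphDelta0 m Γ).map fun e => (σ e.1, σ e.2)) ∧
    (∀ i : Fin n,
      graphDeltaI (fun k => m (σ.symm k)) i
          ((Γ.map fun e => (permCompose σ τ e.1, permCompose σ τ e.2)).map fun e =>
            (Fin.cast (Equiv.sum_comp σ.symm m).symm e.1,
              Fin.cast (Equiv.sum_comp σ.symm m).symm e.2)) =
        (graphDeltaI m (σ.symm i) Γ).map fun e =>
          (τ (σ.symm i) e.1, τ (σ.symm i) e.2)) := by
  have key := permCompose_repr σ τ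
  constructor
  · unfold graphDelta0
    rw [Multiset.map_map, Multiset.filterMap_map, Multiset.map_filterMap]
    congr 1
    funext e
    simp only [Function.comp, key]
    rcases h1 : (finSigmaEquiv n m).symm e.1 with ⟨i1, j1⟩
    rcases h2 : (finSigmaEquiv n m).symm e.2 with ⟨i2, j2⟩
    simp only [Equiv.sigmaCongr, Equiv.coe_fn_mk, Sigma.map]
    by_cases h : i1 = i2
    · simp [h]
    · simp [h, fun h' => h (σ.injective h')]
  · intro i
    unfold graphDeltaI
    rw [Multiset.map_map, Multiset.filterMap_map, Multiset.map_filterMap]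
    congr 1
    funext e
    simp only [Function.comp_apply]
    show deltaIFun (fun k => m (σ.symm k)) i _ _ =
      Option.map _ (deltaIFun m (σ.symm i) _ _)
    rw [key, key]
    exact deltaIFun_equivar σ τ i _ _
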